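/- There do not exist continuous functions φ_1, φ_2 : ℝ² → ℝ such that xy = φ_1(x,y)·x² + φ_2(x,y)·y² for all (x,y) ∈ ℝ². -/

import Mathlib

open Filter Topology

lemma aux5 {f : ℝ → ℝ} {c : ℝ} (hf : Continuous f) (h : ∀ t : ℝ, t ≠ 0 → f t = c) :
    f 0 = c := by
  have h1 : Tendsto f (𝓝[≠] (0:ℝ)) (𝓝 (f 0)) :=
    (hf.tendsto 0).mono_left nhdsWithin_le_nhds
  have h2 : Tendsto f (𝓝[≠] (0:ℝ)) (𝓝 c) := by
    refine Tendsto.congr' ?_ tendsto_const_nhds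
    filter_upwards [self_mem_nhdsWithin] with t ht
    exact (h t ht).symm
  exact tendsto_nhds_unique h1 h2

/-- `xy` cannot be written as `φ₁·x² + φ₂·y²` with `φ₁, φ₂` continuous on `ℝ²`. -/
theorem statement5 :
    ¬ ∃ φ₁ φ₂ : ℝ × ℝ → ℝ,
      Continuous φ₁ ∧ Continuous φ₂ ∧
      ∀ x y : ℝ, x * y = φ₁ (x, y) * x ^ 2 + φ₂ (x, y) * y ^ 2 := by
  rintro ⟨φ₁, φ₂, hc1, hc2, heq⟩
  have h1 : φ₁ (0, 0) = 0 := by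
    apply aux5 (f := fun t => φ₁ (t, 0))
    · exact hc1.comp (continuous_id.prodMk continuous_const)
    · intro t ht
      have := heq t 0
      norm_num at this
      tauto
  have h2 : φ₂ (0, 0) = 0 := by
    apply aux5 (f := fun t => φ₂ (0, t))
    · exact hc2.comp (continuous_const.prodMk continuous_id)
    · intro t ht
      have := heq 0 t
      norm_num at this
      tauto
  have h3 : φ₁ (0, 0) + φ₂ (0, 0) = 1 := by
    apply aux5 (f := fun t => φ₁ (t, t) + φ₂ (t, t))
    · exact (hc1.comp (continuous_id.prodMk continuous_id)).add
        (hc2.comp (continuous_id.prodMk continuous_id))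
    · intro t ht
      have := heq t t
      have ht2 : t ^ 2 ≠ 0 := pow_ne_zero _ ht
      have key : (φ₁ (t, t) + φ₂ (t, t)) * t ^ 2 = 1 * t ^ 2 := by ring_nf; ring_nf at this; linarith
      exact mul_right_cancel₀ ht2 key
  rw [h1, h2] at h3
  norm_num at h3
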